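/- Let K: ℝ³ → ℝ be continuous with |K(p)p| ≤ k₀ for all p. Then for any C¹ map u: ℝ² → ℝ³ with finite Dirichlet energy and any t₁, t₂ > 0, |∫_{ℝ²}(Q_K(t₁u) - Q_K(t₂u))·(u_x ∧ u_y)| ≤ 2k₀ |log(t₂/t₁)| · D(u), where Q_K(p) = (∫₀¹K(sp)s²ds)p and D(u) = (1/2)∫|∇u|². -/

import Mathlib

noncomputable section
open MeasureTheory Real Filter Set
open scoped Topology

/-- `ℝ³` with the Euclidean norm. -/
abbrev E3 := EuclideanSpace ℝ (Fin 3)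

/-- Cross product in `ℝ³`. -/
def cross (a b : E3) : E3 :=
  (EuclideanSpace.equiv (Fin 3) ℝ).symm
    ![a 1 * b 2 - a 2 * b 1, a 2 * b 0 - a 0 * b 2, a 0 * b 1 - a 1 * b 0]

/-- Euclidean dot product. -/
def dot (a b : E3) : ℝ := inner ℝ a b

/-- Partial derivative `u_x`. -/
def ux (u : ℝ × ℝ → E3) (z : ℝ × ℝ) : E3 := fderiv ℝ u z (1, 0)

/-- Partial derivative `u_y`. -/
def uy (u : ℝ × ℝ → E3) (z : ℝ × ℝ) : E3 := fderiv ℝ u z (0, 1)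

/-- Dirichlet density `|∇u|²`. -/
def dirDen (u : ℝ × ℝ → E3) (z : ℝ × ℝ) : ℝ := ‖ux u z‖ ^ 2 + ‖uy u z‖ ^ 2

/-- Dirichlet integral `D(u) = (1/2)∫|∇u|²`. -/
def Dir (u : ℝ × ℝ → E3) : ℝ := (1 / 2) * ∫ z : ℝ × ℝ, dirDen u z

/-- Algebraic volume `V(u) = (1/3)∫ u·(u_x ∧ u_y)`. -/
def Vol (u : ℝ × ℝ → E3) : ℝ := (1 / 3) * ∫ z : ℝ × ℝ, dot (u z) (cross (ux u z) (uy u z))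

/-- `m_K(p) = ∫₀¹ K(sp)s² ds`. -/
def mK (K : E3 → ℝ) (p : E3) : ℝ := ∫ s in (0:ℝ)..1, K (s • p) * s ^ 2

/-- The vector field `Q_K(p) = m_K(p)·p`. -/
def QK (K : E3 → ℝ) (p : E3) : E3 := mK K p • p

lemma norm_sq_E3 (v : E3) : ‖v‖ ^ 2 = v 0 ^ 2 + v 1 ^ 2 + v 2 ^ 2 := by
  rw [EuclideanSpace.norm_eq, Real.sq_sqrt (by positivity)]
  simp [Fin.sum_univ_three, sq_abs]

lemma cross_apply0 (a b : E3) : cross a b 0 = a 1 * b 2 - a 2 * b 1 := rfl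
lemma cross_apply1 (a b : E3) : cross a b 1 = a 2 * b 0 - a 0 * b 2 := rfl
lemma cross_apply2 (a b : E3) : cross a b 2 = a 0 * b 1 - a 1 * b 0 := rfl

lemma norm_cross_le (a b : E3) : ‖cross a b‖ ≤ ‖a‖ * ‖b‖ := by
  have h2 : ‖cross a b‖ ^ 2 ≤ (‖a‖ * ‖b‖) ^ 2 := by
    rw [mul_pow, norm_sq_E3, norm_sq_E3, norm_sq_E3, cross_apply0, cross_apply1, cross_apply2]
    nlinarith [sq_nonneg (a 0 * b 0 + a 1 * b 1 + a 2 * b 2)]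
  calc ‖cross a b‖ = √(‖cross a b‖ ^ 2) := (Real.sqrt_sq (norm_nonneg _)).symm
    _ ≤ √((‖a‖ * ‖b‖) ^ 2) := Real.sqrt_le_sqrt h2
    _ = ‖a‖ * ‖b‖ := Real.sqrt_sq (by positivity)


lemma QK_scale_diff (K : E3 → ℝ) (k₀ : ℝ) (hK : Continuous K)
    (hk : ∀ p : E3, |K p| * ‖p‖ ≤ k₀) (p : E3)
    (t₁ t₂ : ℝ) (ht₁ : 0 < t₁) (ht₂ : 0 < t₂) :
    ‖QK K (t₁ • p) - QK K (t₂ • p)‖ ≤ 2 * k₀ * |Real.log (t₂ / t₁)| := by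
  have hk0 : 0 ≤ k₀ := by simpa using hk 0
  by_cases hp : p = 0
  · simp [hp, QK]; positivity
  have hnp : 0 < ‖p‖ := norm_pos_iff.mpr hp
  set C : ℝ := k₀ / ‖p‖ with hC
  have hC0 : 0 ≤ C := by positivity
  set g : ℝ → ℝ := fun σ => K (σ • p) * σ ^ 2 with hg
  have hgc : Continuous g := ((hK.comp (continuous_id.smul continuous_const)).mul (continuous_pow 2))
  set G : ℝ → ℝ := fun t => ∫ σ in (0:ℝ)..t, g σ with hGdef
  have hGbound : ∀ T : ℝ, 0 ≤ T → |G T| ≤ C * T ^ 2 / 2 := by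
    intro T hT
    have h1 : |G T| ≤ ∫ σ in (0:ℝ)..T, |g σ| := by
      simpa [Real.norm_eq_abs] using
        intervalIntegral.norm_integral_le_integral_norm (f := g) (a := 0) (b := T) hT
    have h2 : ∫ σ in (0:ℝ)..T, |g σ| ≤ ∫ σ in (0:ℝ)..T, C * σ := by
      apply intervalIntegral.integral_mono_on hT (hgc.abs.intervalIntegrable _ _)
        ((continuous_const.mul continuous_id).intervalIntegrable _ _)
      intro σ hσ
      have hkσ := hk (σ • p)
      rw [norm_smul, Real.norm_eq_abs, abs_of_nonneg hσ.1] at hkσ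
      have habs : |g σ| = |K (σ • p)| * σ ^ 2 := by
        rw [hg, abs_mul, abs_of_nonneg (sq_nonneg σ)]
      rw [habs]; show |K (σ • p)| * σ ^ 2 ≤ C * id σ; rw [hC, div_mul_eq_mul_div, le_div_iff₀ hnp]
      simp only [id_eq]
      nlinarith [mul_le_mul_of_nonneg_right hkσ hσ.1, abs_nonneg (K (σ • p))]
    have h3 : ∫ σ in (0:ℝ)..T, C * σ = C * T ^ 2 / 2 := by
      rw [intervalIntegral.integral_const_mul]
      simp [integral_id]; ring
    linarith
  have hG : ∀ t : ℝ, HasDerivAt G (g t) t := fun t =>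
    intervalIntegral.integral_hasDerivAt_right (hgc.intervalIntegrable _ _)
      (hgc.stronglyMeasurableAtFilter _ _) hgc.continuousAt
  set Φ : ℝ → ℝ := fun s => Real.exp (-2 * s) * G (Real.exp s) with hΦdef
  set Φ' : ℝ → ℝ := fun s =>
    (Real.exp (-2 * s) * (-2)) * G (Real.exp s) + Real.exp (-2 * s) * (g (Real.exp s) * Real.exp s)
    with hΦ'def
  have hΦ : ∀ s, HasDerivAt Φ (Φ' s) s := by
    intro s
    have h0 : HasDerivAt (fun s : ℝ => -2 * s) (-2) s := by
      simpa using (hasDerivAt_id s).const_mul (-2 : ℝ)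
    have h1 : HasDerivAt (fun s : ℝ => Real.exp (-2 * s)) (Real.exp (-2 * s) * (-2)) s := h0.exp
    have h2 : HasDerivAt (fun s : ℝ => G (Real.exp s)) (g (Real.exp s) * Real.exp s) s :=
      (hG (Real.exp s)).comp s (Real.hasDerivAt_exp s)
    exact h1.mul h2
  have hexp2 : ∀ s : ℝ, Real.exp (-2 * s) = (Real.exp s ^ 2)⁻¹ := by
    intro s
    rw [show (-2 : ℝ) * s = -(((2:ℕ):ℝ) * s) by push_cast; ring, Real.exp_neg, Real.exp_nat_mul]
  have hΦbound : ∀ s : ℝ, |Φ' s| ≤ 2 * C := by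
    intro s
    set T := Real.exp s with hT
    have hTpos : 0 < T := Real.exp_pos s
    have hGb := hGbound T hTpos.le
    have hkT := hk (T • p)
    rw [norm_smul, Real.norm_eq_abs, abs_of_pos hTpos] at hkT
    have hinv : (0:ℝ) < (T ^ 2)⁻¹ := by positivity
    have h1 : |(Real.exp (-2 * s) * (-2)) * G T| ≤ C := by
      rw [hexp2 s, ← hT, abs_mul, abs_mul, abs_of_pos hinv]
      have he2 : |(-2 : ℝ)| = 2 := by norm_num
      rw [he2]
      have h := mul_le_mul_of_nonneg_left hGb (by positivity : (0:ℝ) ≤ (T ^ 2)⁻¹ * 2)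
      calc (T ^ 2)⁻¹ * 2 * |G T| ≤ (T ^ 2)⁻¹ * 2 * (C * T ^ 2 / 2) := h
        _ = C := by field_simp
    have h2 : |Real.exp (-2 * s) * (g T * T)| ≤ C := by
      have hgT : |g T| = |K (T • p)| * T ^ 2 := by
        rw [hg, abs_mul, abs_of_nonneg (sq_nonneg T)]
      rw [hexp2 s, ← hT, abs_mul, abs_mul, hgT, abs_of_pos hTpos, abs_of_pos hinv]
      have heq : (T ^ 2)⁻¹ * (|K (T • p)| * T ^ 2 * T) = |K (T • p)| * T := by
        field_simp
      rw [heq, hC, le_div_iff₀ hnp, mul_assoc]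
      exact hkT
    calc |Φ' s| ≤ |(Real.exp (-2 * s) * (-2)) * G T| + |Real.exp (-2 * s) * (g T * T)| := by
          rw [hΦ'def]; exact abs_add_le _ _
      _ ≤ 2 * C := by linarith
  have hmvt : ∀ a b : ℝ, |Φ b - Φ a| ≤ 2 * C * |b - a| := by
    intro a b
    have := Convex.norm_image_sub_le_of_norm_hasDerivWithin_le (f := Φ) (f' := Φ')
      (s := Set.univ) (fun x _ => (hΦ x).hasDerivWithinAt)
      (fun x _ => by simpa [Real.norm_eq_abs] using hΦbound x)
      convex_univ (Set.mem_univ a) (Set.mem_univ b)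
    simpa [Real.norm_eq_abs] using this
  have hQ : ∀ t : ℝ, 0 < t → QK K (t • p) = Φ (Real.log t) • p := by
    intro t ht
    have hm : mK K (t • p) = t⁻¹ * (t ^ 2)⁻¹ * G t := by
      have step1 : mK K (t • p) = ∫ s in (0:ℝ)..1, (t ^ 2)⁻¹ * g (t * s) := by
        unfold mK
        apply intervalIntegral.integral_congr
        intro s _
        have hsm : (t * s) • p = s • t • p := by rw [smul_smul, mul_comm]
        simp only [hg, hsm]
        have htne : (t:ℝ) ^ 2 ≠ 0 := by positivity
        field_simp
      rw [step1, intervalIntegral.integral_const_mul,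
        intervalIntegral.integral_comp_mul_left g ht.ne']
      simp only [mul_zero, mul_one, smul_eq_mul, hGdef]
      ring
    have hexp : Real.exp (-2 * Real.log t) = (t ^ 2)⁻¹ := by
      rw [hexp2, Real.exp_log ht]
    unfold QK
    rw [hm, smul_smul]
    congr 1
    rw [hΦdef]
    simp only [Real.exp_log ht, hexp]
    field_simp
    try ring
  rw [hQ t₁ ht₁, hQ t₂ ht₂, ← sub_smul, norm_smul, Real.norm_eq_abs]
  have hd := hmvt (Real.log t₂) (Real.log t₁)
  have hlog : |Real.log (t₂ / t₁)| = |Real.log t₁ - Real.log t₂| := by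
    rw [Real.log_div ht₂.ne' ht₁.ne', abs_sub_comm]
  rw [hlog]
  calc |Φ (Real.log t₁) - Φ (Real.log t₂)| * ‖p‖
      ≤ 2 * C * |Real.log t₁ - Real.log t₂| * ‖p‖ :=
        mul_le_mul_of_nonneg_right hd (norm_nonneg p)
    _ = 2 * k₀ * |Real.log t₁ - Real.log t₂| := by
        rw [hC]; field_simp; try ring


/-- Log-Lipschitz estimate in the scaling parameter:
`|∫ (Q_K(t₁u) - Q_K(t₂u))·(u_x ∧ u_y)| ≤ 2k₀|log(t₂/t₁)|·D(u)`. -/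
theorem stmt18 (K : E3 → ℝ) (k₀ : ℝ) (hK : Continuous K)
    (hk : ∀ p : E3, |K p| * ‖p‖ ≤ k₀)
    (u : ℝ × ℝ → E3) (hu : ContDiff ℝ 1 u) (hDint : Integrable (dirDen u))
    (t₁ t₂ : ℝ) (ht₁ : 0 < t₁) (ht₂ : 0 < t₂) :
    |∫ z : ℝ × ℝ, dot (QK K (t₁ • u z) - QK K (t₂ • u z)) (cross (ux u z) (uy u z))|
      ≤ 2 * k₀ * |Real.log (t₂ / t₁)| * Dir u := by
  have hk0 : 0 ≤ k₀ := by simpa using hk 0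
  set L := |Real.log (t₂ / t₁)| with hL
  have hLnn : 0 ≤ L := abs_nonneg _
  have hbound : ∀ z : ℝ × ℝ,
      ‖dot (QK K (t₁ • u z) - QK K (t₂ • u z)) (cross (ux u z) (uy u z))‖
        ≤ (k₀ * L) * dirDen u z := by
    intro z
    have h1 : |dot (QK K (t₁ • u z) - QK K (t₂ • u z)) (cross (ux u z) (uy u z))|
        ≤ ‖QK K (t₁ • u z) - QK K (t₂ • u z)‖ * ‖cross (ux u z) (uy u z)‖ :=
      abs_real_inner_le_norm _ _
    have h2 : ‖QK K (t₁ • u z) - QK K (t₂ • u z)‖ ≤ 2 * k₀ * L :=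
      QK_scale_diff K k₀ hK hk (u z) t₁ t₂ ht₁ ht₂
    have h3 : ‖cross (ux u z) (uy u z)‖ ≤ dirDen u z / 2 := by
      refine (norm_cross_le _ _).trans ?_
      unfold dirDen
      nlinarith [sq_nonneg (‖ux u z‖ - ‖uy u z‖)]
    have hdnn : 0 ≤ dirDen u z := by unfold dirDen; positivity
    rw [Real.norm_eq_abs]
    calc |dot (QK K (t₁ • u z) - QK K (t₂ • u z)) (cross (ux u z) (uy u z))|
        ≤ ‖QK K (t₁ • u z) - QK K (t₂ • u z)‖ * ‖cross (ux u z) (uy u z)‖ := h1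
      _ ≤ (2 * k₀ * L) * (dirDen u z / 2) :=
          mul_le_mul h2 h3 (norm_nonneg _) (by positivity)
      _ = (k₀ * L) * dirDen u z := by ring
  have hInt : Integrable (fun z : ℝ × ℝ => (k₀ * L) * dirDen u z) := hDint.const_mul _
  have hmain := MeasureTheory.norm_integral_le_of_norm_le hInt
    (Filter.Eventually.of_forall hbound)
  rw [Real.norm_eq_abs] at hmain
  calc |∫ z : ℝ × ℝ, dot (QK K (t₁ • u z) - QK K (t₂ • u z)) (cross (ux u z) (uy u z))|
      ≤ ∫ z : ℝ × ℝ, (k₀ * L) * dirDen u z := hmain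
    _ = (k₀ * L) * ∫ z : ℝ × ℝ, dirDen u z := integral_const_mul _ _
    _ = 2 * k₀ * L * Dir u := by unfold Dir; ring
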